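/- arXiv:1605.07170 — 5 statements merged into one kernel-verified Lean document; each statement's English description precedes it below -/
import Mathlib

section
/- Let $A, B \subseteq \mathbb{R}^n$ be compact sets, and for $x \in \mathbb{R}^n$ write $A_x = A \cap (A - x)$. Then $\int_{A-A} \mu(A_x + B)\, dx \le \mu(A+B)^2$, where the integral is over the difference set $A - A$ with respect to Lebesgue measure. -/
open MeasureTheory Pointwise

theorem sumset_lintegral_le {n : ℕ} (A B : Set (Fin n → ℝ))
    (hA : IsCompact A) (hB : IsCompact B) :
    ∫⁻ x in A - A, volume ((A ∩ (A - {x})) + B) ≤ volume (A + B) ^ 2 := by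
  set C := A + B with hC
  have hCc : IsCompact C := hA.add hB
  have hCm : MeasurableSet C := hCc.isClosed.measurableSet
  set ι : (Fin n → ℝ) → ENNReal := C.indicator (1 : (Fin n → ℝ) → ENNReal) with hι
  have hιm : Measurable ι := measurable_one.indicator hCm
  have hιint : ∫⁻ y, ι y = volume C := by
    rw [hι, lintegral_indicator_one hCm]
  -- step 1: pointwise inclusion
  have hincl : ∀ x : Fin n → ℝ, (A ∩ (A - {x})) + B ⊆ C ∩ ((· + x) ⁻¹' C) := by
    rintro x y ⟨a, ⟨haA, a', ha', x', hx', rfl⟩, b, hb, rfl⟩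
    rw [Set.mem_singleton_iff] at hx'
    subst hx'
    refine ⟨⟨a' - x', haA, b, hb, rfl⟩, ?_⟩
    refine Set.mem_preimage.2 ⟨a', ha', b, hb, ?_⟩
    show a' + b = a' - x' + b + x'
    abel
  calc ∫⁻ x in A - A, volume ((A ∩ (A - {x})) + B)
      ≤ ∫⁻ x, volume (C ∩ ((· + x) ⁻¹' C)) := by
        refine le_trans (setLIntegral_le_lintegral _ _) (lintegral_mono fun x => ?_)
        exact measure_mono (hincl x)
    _ = volume C ^ 2 := ?_
  have key : ∀ x : Fin n → ℝ, volume (C ∩ ((· + x) ⁻¹' C))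
      = ∫⁻ y, ι y * ι (y + x) := by
    intro x
    rw [← lintegral_indicator_one (hCm.inter (measurable_add_const x hCm))]
    refine lintegral_congr fun y => ?_
    by_cases h1 : y ∈ C <;> by_cases h2 : y + x ∈ C <;>
      simp [hι, Set.indicator_apply, h1, h2, Set.mem_preimage]
  simp_rw [key]
  rw [lintegral_lintegral_swap]
  · have step : ∀ y : Fin n → ℝ, ∫⁻ x, ι y * ι (y + x) = ι y * volume C := by
      intro y
      have hf : Measurable fun x : Fin n → ℝ => ι (y + x) :=
        hιm.comp (measurable_const_add y)
      rw [lintegral_const_mul _ hf]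
      congr 1
      rw [lintegral_add_left_eq_self ι y, hιint]
    simp_rw [step]
    rw [lintegral_mul_const _ hιm, hιint, sq]
  · exact ((hιm.comp measurable_snd).mul
      (hιm.comp (measurable_snd.add measurable_fst))).aemeasurable
end

section
/- Let $A \subseteq \mathbb{R}^n$ be a compact convex set and let $r \in [0,1]$. Then for every $x \in r \cdot (A - A)$ one has $\mu(A \cap (A - x)) \ge (1-r)^n \mu(A)$. -/
open MeasureTheory Pointwise

theorem convex_inter_sub_volume_lower {n : ℕ} (A : Set (Fin n → ℝ))
    (hA : IsCompact A) (hAconv : Convex ℝ A)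
    (r : ℝ) (hr0 : 0 ≤ r) (hr1 : r ≤ 1)
    (x : Fin n → ℝ) (hx : x ∈ r • (A - A)) :
    ENNReal.ofReal ((1 - r) ^ n) * volume A ≤ volume (A ∩ (A - {x})) := by
  obtain ⟨y, hy, hxy⟩ := hx
  obtain ⟨a, ha, b, hb, rfl⟩ := hy
  set S : Set (Fin n → ℝ) := (r • b) +ᵥ ((1 - r) • A) with hS
  have hsub : S ⊆ A ∩ (A - {x}) := by
    rintro z ⟨w, ⟨a', ha', rfl⟩, rfl⟩
    constructor
    · have := hAconv ha' hb (sub_nonneg.2 hr1) hr0 (by ring : (1 - r) + r = 1)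
      simpa [vadd_eq_add, add_comm] using this
    · refine ⟨(1 - r) • a' + r • a,
        hAconv ha' ha (sub_nonneg.2 hr1) hr0 (by ring : (1 - r) + r = 1),
        x, rfl, ?_⟩
      rw [← hxy]
      simp only [vadd_eq_add, smul_sub]
      abel
  calc ENNReal.ofReal ((1 - r) ^ n) * volume A
      = volume S := by
        rw [hS, measure_vadd, Measure.addHaar_smul]
        congr 2
        rw [abs_of_nonneg (pow_nonneg (by linarith) _)]
        simp
    _ ≤ _ := measure_mono hsub
end

section
/- Let $A \subseteq \mathbb{R}^n$ be a compact convex set and let $k$ be an integer with $1 \le k \le n$. Then $\int_{A-A} \mu(A \cap (A - x))^{k/n}\, dx \ge \frac{k!\, n!}{(n+k)!}\, \mu(A)^{k/n}\, \mu(A-A)$, where the integral is over the difference set $A - A$ with respect to Lebesgue measure. -/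
open MeasureTheory Pointwise ENNReal

lemma beta_nat (a b : ℕ) :
    ∫ u in (0:ℝ)..1, u ^ a * (1-u) ^ b
      = (a.factorial * b.factorial : ℝ) / (a+b+1).factorial := by
  have h1 : (0:ℝ) < ((a:ℂ)+1).re := by simp; positivity
  have h2 : (0:ℝ) < ((b:ℂ)+1).re := by simp; positivity
  have key := Complex.Gamma_mul_Gamma_eq_betaIntegral h1 h2
  have hβ : Complex.betaIntegral ((a:ℂ)+1) ((b:ℂ)+1)
      = ((∫ u in (0:ℝ)..1, u ^ a * (1-u) ^ b : ℝ) : ℂ) := by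
    rw [Complex.betaIntegral, ← intervalIntegral.integral_ofReal]
    refine intervalIntegral.integral_congr fun x _ => ?_
    rw [show ((a:ℂ)+1-1) = (a:ℕ) by ring,
        show ((b:ℂ)+1-1) = (b:ℕ) by ring,
        Complex.cpow_natCast, Complex.cpow_natCast]
    push_cast
    ring
  have hΓa : Complex.Gamma ((a:ℂ)+1) = (a.factorial : ℂ) := by
    exact_mod_cast Complex.Gamma_nat_eq_factorial a
  have hΓb : Complex.Gamma ((b:ℂ)+1) = (b.factorial : ℂ) := by
    exact_mod_cast Complex.Gamma_nat_eq_factorial b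
  have hΓab : Complex.Gamma ((a:ℂ)+1 + ((b:ℂ)+1)) = ((a+b+1).factorial : ℂ) := by
    rw [show ((a:ℂ)+1 + ((b:ℂ)+1)) = (((a+b+1:ℕ)):ℂ)+1 by push_cast; ring]
    exact_mod_cast Complex.Gamma_nat_eq_factorial (a+b+1)
  rw [hβ, hΓa, hΓb, hΓab] at key
  rw [eq_div_iff (by exact_mod_cast (a+b+1).factorial_ne_zero : ((a+b+1).factorial:ℝ) ≠ 0)]
  have keyR : (a.factorial : ℝ) * b.factorial
      = ((a+b+1).factorial : ℝ) * ∫ u in (0:ℝ)..1, u ^ a * (1-u) ^ b := by exact_mod_cast key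
  linear_combination -keyR

lemma mem_sub_singleton' {n : ℕ} {A : Set (Fin n → ℝ)} {x y : Fin n → ℝ} :
    y ∈ A - {x} ↔ y + x ∈ A := by
  constructor
  · rintro ⟨p, hp, q, rfl, rfl⟩
    simpa using hp
  · intro h
    exact ⟨y + x, h, x, rfl, by simp⟩

lemma geom_lemma {n : ℕ} {A : Set (Fin n → ℝ)} (hAconv : Convex ℝ A)
    {a b : Fin n → ℝ} (ha : a ∈ A) (hb : b ∈ A) {u : ℝ} (hu0 : 0 ≤ u) (hu1 : u ≤ 1) :
    ENNReal.ofReal ((1-u)^n) * volume A ≤ volume (A ∩ (A - {u • (a - b)})) := by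
  have hsub : (u • b) +ᵥ ((1-u) • A) ⊆ A ∩ (A - {u • (a - b)}) := by
    rintro z ⟨w, ⟨v, hv, rfl⟩, rfl⟩
    have h1 : (1-u) • v + u • b ∈ A := hAconv hv hb (by linarith) hu0 (by ring)
    have h2 : (1-u) • v + u • a ∈ A := hAconv hv ha (by linarith) hu0 (by ring)
    constructor
    · show u • b +ᵥ (1-u) • v ∈ A
      rw [vadd_eq_add, add_comm]; exact h1
    · rw [mem_sub_singleton']
      have e : (u • b +ᵥ (1-u) • v) + u • (a - b) = (1-u) • v + u • a := by
        rw [vadd_eq_add, smul_sub]; abel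
      show (u • b +ᵥ (1-u) • v) + u • (a - b) ∈ A
      rw [e]; exact h2
  calc ENNReal.ofReal ((1-u)^n) * volume A
      = volume ((u • b) +ᵥ ((1-u) • A)) := by
        rw [measure_vadd, Measure.addHaar_smul_of_nonneg volume (by linarith) A,
          Module.finrank_fin_fun]
    _ ≤ _ := measure_mono hsub

theorem lintegral_inter_rpow_lower {n : ℕ} (A : Set (Fin n → ℝ))
    (hA : IsCompact A) (hAconv : Convex ℝ A)
    (k : ℕ) (hk1 : 1 ≤ k) (hkn : k ≤ n) :
    ((k.factorial : ℝ≥0∞) * n.factorial / (n + k).factorial)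
      * volume A ^ ((k : ℝ) / n) * volume (A - A)
      ≤ ∫⁻ x in A - A, volume (A ∩ (A - {x})) ^ ((k : ℝ) / n) := by
  classical
  have hn1 : 1 ≤ n := hk1.trans hkn
  have hnR : (0:ℝ) < n := by exact_mod_cast hn1
  have hkR : (0:ℝ) < k := by exact_mod_cast hk1
  by_cases hV0 : volume A = 0
  · have h0 : volume A ^ ((k:ℝ)/n) = 0 := by
      rw [hV0]; exact ENNReal.zero_rpow_of_pos (by positivity)
    rw [h0, mul_zero, zero_mul]
    exact zero_le
  set C : Set (Fin n → ℝ) := A - A with hC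
  obtain ⟨a0, ha0⟩ : A.Nonempty := nonempty_of_measure_ne_zero hV0
  have h0C : (0 : Fin n → ℝ) ∈ C := ⟨a0, ha0, a0, ha0, sub_self a0⟩
  have hCconv : Convex ℝ C := hAconv.sub hAconv
  have hVtop : volume A ≠ ∞ := hA.measure_lt_top.ne
  set F : (Fin n → ℝ) → ℝ≥0∞ := fun x => volume (A ∩ (A - {x})) with hF
  -- measurability of F
  have hAm : MeasurableSet A := hA.isClosed.measurableSet
  have hS : MeasurableSet {p : (Fin n → ℝ) × (Fin n → ℝ) | p.2 ∈ A ∧ p.2 + p.1 ∈ A} :=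
    (measurable_snd hAm).inter ((measurable_snd.add measurable_fst) hAm)
  have hFmeas : Measurable F := by
    have key : F = fun x =>
        volume (Prod.mk x ⁻¹' {p : (Fin n → ℝ) × (Fin n → ℝ) | p.2 ∈ A ∧ p.2 + p.1 ∈ A}) := by
      funext x
      have : A ∩ (A - {x})
          = Prod.mk x ⁻¹' {p : (Fin n → ℝ) × (Fin n → ℝ) | p.2 ∈ A ∧ p.2 + p.1 ∈ A} := by
        ext y
        simp only [Set.mem_inter_iff, Set.mem_preimage, Set.mem_setOf_eq]
        rw [mem_sub_singleton']
      simp only [hF, this]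
    rw [key]
    exact measurable_measure_prodMk_left hS
  have hFfin : ∀ x, F x ≠ ∞ :=
    fun x => ((measure_mono Set.inter_subset_left).trans_lt hA.measure_lt_top).ne
  set f : (Fin n → ℝ) → ℝ := fun x => (F x ^ ((1:ℝ)/n)).toReal with hf
  have hfmeas : Measurable f :=
    (hFmeas.pow measurable_const).ennreal_toReal
  set N : ℝ := (volume A ^ ((1:ℝ)/n)).toReal with hN
  have hNnetop : volume A ^ ((1:ℝ)/n) ≠ ∞ := ENNReal.rpow_ne_top_of_nonneg (by positivity) hVtop
  have hNpos : 0 < N := by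
    apply ENNReal.toReal_pos _ hNnetop
    simp only [ne_eq, ENNReal.rpow_eq_zero_iff, not_or]
    constructor
    · rintro ⟨h, -⟩; exact hV0 h
    · rintro ⟨-, h⟩; linarith [one_div_pos.mpr hnR, h]
  -- pointwise identity for the integrand
  have hpt : ∀ x, F x ^ ((k:ℝ)/n) = ENNReal.ofReal (f x ^ (k:ℝ)) := by
    intro x
    have e1 : f x ^ (k:ℝ) = (F x ^ ((1:ℝ)/n * k)).toReal := by
      rw [ENNReal.rpow_mul]
      exact ENNReal.toReal_rpow _ _
    rw [e1, ENNReal.ofReal_toReal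
        (ENNReal.rpow_ne_top_of_nonneg (by positivity) (hFfin x)),
      show (1:ℝ)/n * k = (k:ℝ)/n by ring]
  -- layer cake
  have hlayer := lintegral_rpow_eq_lintegral_meas_le_mul (volume.restrict C)
    (Filter.Eventually.of_forall fun x => ENNReal.toReal_nonneg)
    hfmeas.aemeasurable (p := (k:ℝ)) (by positivity)
  have main : ∫⁻ x in C, F x ^ ((k:ℝ)/n)
      = ENNReal.ofReal k * ∫⁻ t in Set.Ioi (0:ℝ),
          (volume.restrict C) {a | t ≤ f a} * ENNReal.ofReal (t ^ ((k:ℝ)-1)) := by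
    rw [← hlayer]
    exact lintegral_congr hpt
  -- tail bound
  have tail : ∀ t ∈ Set.Ioo (0:ℝ) N,
      ENNReal.ofReal ((1 - t/N)^n) * volume C ≤ (volume.restrict C) {a | t ≤ f a} := by
    intro t ht
    have htN : t / N ≤ 1 := (div_le_one hNpos).mpr ht.2.le
    have hs0 : 0 ≤ 1 - t/N := by linarith
    have hs1 : 1 - t/N ≤ 1 := by
      have : 0 ≤ t / N := div_nonneg ht.1.le hNpos.le
      linarith
    have hsub2 : (1 - t/N) • C ⊆ {a | t ≤ f a} ∩ C := by
      rintro x ⟨y, hy, rfl⟩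
      obtain ⟨a, haA, b, hbA, rfl⟩ := hy
      have htN0 : 0 ≤ t / N := div_nonneg ht.1.le hNpos.le
      constructor
      · show t ≤ f ((1 - t/N) • (a - b))
        have hge := geom_lemma hAconv haA hbA hs0 hs1
        rw [_root_.sub_sub_cancel] at hge
        have h1 : (ENNReal.ofReal ((t/N)^n) * volume A) ^ ((1:ℝ)/n)
            ≤ F ((1 - t/N) • (a - b)) ^ ((1:ℝ)/n) :=
          ENNReal.rpow_le_rpow hge (by positivity)
        rw [ENNReal.mul_rpow_of_nonneg _ _ (by positivity),
          ← Real.rpow_natCast (t/N) n,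
          ENNReal.ofReal_rpow_of_nonneg (by positivity) (by positivity),
          ← Real.rpow_mul htN0,
          mul_one_div_cancel hnR.ne', Real.rpow_one] at h1
        have h2 := ENNReal.toReal_mono
          (ENNReal.rpow_ne_top_of_nonneg (by positivity) (hFfin _)) h1
        rw [ENNReal.toReal_mul, ENNReal.toReal_ofReal htN0] at h2
        have htt : t / N * N = t := div_mul_cancel₀ t hNpos.ne'
        rw [← hN] at h2
        calc t = t / N * N := htt.symm
          _ ≤ f ((1 - t/N) • (a - b)) := h2
      · have hyC : a - b ∈ C := ⟨a, haA, b, hbA, rfl⟩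
        have hmem : (1 - t/N) • (a - b) + (t/N) • (0 : Fin n → ℝ) ∈ C :=
          hCconv hyC h0C hs0 htN0 (by ring)
        simpa using hmem
    calc ENNReal.ofReal ((1-t/N)^n) * volume C = volume ((1-t/N) • C) := by
          rw [Measure.addHaar_smul_of_nonneg volume hs0, Module.finrank_fin_fun]
      _ ≤ volume ({a | t ≤ f a} ∩ C) := measure_mono hsub2
      _ = (volume.restrict C) {a | t ≤ f a} :=
          (Measure.restrict_apply (hfmeas measurableSet_Ici)).symm

  -- φ and its integral
  set φ : ℝ → ℝ := fun t => (1 - t/N)^n * t^(k-1) with hφ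
  have φcont : Continuous φ := by
    apply Continuous.mul
    · exact (continuous_const.sub (continuous_id.div_const N)).pow n
    · exact continuous_id.pow (k-1)
  have φnn : ∀ t ∈ Set.Ioo (0:ℝ) N, 0 ≤ φ t := by
    intro t ht
    have h1 : 0 ≤ 1 - t/N := by
      have := (div_le_one hNpos).mpr ht.2.le
      linarith
    exact mul_nonneg (pow_nonneg h1 n) (pow_nonneg ht.1.le _)
  have hCtop : volume C ≠ ∞ :=
    (Bornology.IsBounded.measure_lt_top (hA.isBounded.sub hA.isBounded)).ne
  have φint : IntegrableOn φ (Set.Ioo 0 N) volume :=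
    (φcont.integrableOn_Icc (a := 0) (b := N)).mono_set Set.Ioo_subset_Icc_self
  have hofeq : ENNReal.ofReal (∫ t in Set.Ioo (0:ℝ) N, φ t)
      = ∫⁻ t in Set.Ioo (0:ℝ) N, ENNReal.ofReal (φ t) :=
    ofReal_integral_eq_lintegral_ofReal φint
      ((ae_restrict_iff' measurableSet_Ioo).mpr (Filter.Eventually.of_forall φnn))
  have hmono : Measurable fun t : ℝ => (volume.restrict C) {a | t ≤ f a} := by
    apply Antitone.measurable
    intro t₁ t₂ h
    exact measure_mono fun a ha => h.trans ha
  have step2 : volume C * ENNReal.ofReal (∫ t in Set.Ioo (0:ℝ) N, φ t)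
      ≤ ∫⁻ t in Set.Ioi (0:ℝ),
          (volume.restrict C) {a | t ≤ f a} * ENNReal.ofReal (t ^ ((k:ℝ)-1)) := by
    rw [hofeq]
    calc volume C * ∫⁻ t in Set.Ioo (0:ℝ) N, ENNReal.ofReal (φ t)
        = ∫⁻ t in Set.Ioo (0:ℝ) N, volume C * ENNReal.ofReal (φ t) :=
          (lintegral_const_mul' _ _ hCtop).symm
      _ ≤ ∫⁻ t in Set.Ioo (0:ℝ) N,
            (volume.restrict C) {a | t ≤ f a} * ENNReal.ofReal (t ^ ((k:ℝ)-1)) := by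
          refine setLIntegral_mono
            (hmono.mul ((measurable_id.pow_const ((k:ℝ)-1)).ennreal_ofReal)) ?_
          intro t ht
          have h1 : 0 ≤ 1 - t/N := by
            have := (div_le_one hNpos).mpr ht.2.le
            linarith
          have e1 : volume C * ENNReal.ofReal (φ t)
              = (ENNReal.ofReal ((1-t/N)^n) * volume C) * ENNReal.ofReal (t^(k-1)) := by
            rw [hφ]
            rw [ENNReal.ofReal_mul (by positivity)]
            ring
          have e2 : t ^ ((k:ℝ)-1) = t ^ (k-1 : ℕ) := by
            rw [show (k:ℝ)-1 = ((k-1:ℕ):ℝ) by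
              rw [Nat.cast_sub hk1]; norm_num, Real.rpow_natCast]
          rw [e1, e2]
          exact mul_le_mul_left (tail t ht) _
      _ ≤ _ := lintegral_mono_set Set.Ioo_subset_Ioi_self
  -- compute the real integral
  have hNk' : N * N^(k-1) = N^k := by
    rw [← pow_succ']
    congr 1
    omega
  have hβ : ∫ t in Set.Ioo (0:ℝ) N, φ t
      = N^k * (((k-1).factorial * n.factorial : ℝ) / (n+k).factorial) := by
    rw [← MeasureTheory.integral_Ioc_eq_integral_Ioo,
      ← intervalIntegral.integral_of_le hNpos.le]
    have e : ∀ t : ℝ, φ t = (fun u => (1-u)^n * (N*u)^(k-1)) (t / N) := by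
      intro t
      have hNt : N * (t/N) = t := by field_simp
      simp only [hφ, hNt]
    have hsub : (∫ t in (0:ℝ)..N, φ t)
        = N • ∫ u in (0:ℝ)..1, (1-u)^n * (N*u)^(k-1) := by
      have h := intervalIntegral.integral_comp_div (a := (0:ℝ)) (b := N)
        (f := fun u : ℝ => (1-u)^n * (N*u)^(k-1)) (c := N) hNpos.ne'
      rw [zero_div, div_self hNpos.ne'] at h
      rw [← h]
      exact intervalIntegral.integral_congr fun t _ => e t
    rw [hsub]
    have e2 : ∀ u : ℝ, (1-u)^n * (N*u)^(k-1) = N^(k-1) * (u^(k-1) * (1-u)^n) := by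
      intro u; ring
    rw [intervalIntegral.integral_congr (fun u _ => e2 u),
      intervalIntegral.integral_const_mul, beta_nat (k-1) n,
      show (k-1)+n+1 = n+k by omega, smul_eq_mul, ← mul_assoc, hNk']
  -- assembling the constants
  have hNk : ENNReal.ofReal (N^k) = volume A ^ ((k:ℝ)/n) := by
    rw [← Real.rpow_natCast N k, hN, ENNReal.toReal_rpow,
      ENNReal.ofReal_toReal (ENNReal.rpow_ne_top_of_nonneg (by positivity) hNnetop),
      ← ENNReal.rpow_mul,
      show (1:ℝ)/n * k = (k:ℝ)/n by ring]
  have hconst : ((k.factorial : ℝ≥0∞) * n.factorial / (n + k).factorial)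
      = ENNReal.ofReal ((k:ℝ) * (((k-1).factorial * n.factorial : ℝ) / (n+k).factorial)) := by
    have hk' : (k:ℝ) * ((k-1).factorial : ℝ) = (k.factorial : ℝ) := by
      exact_mod_cast Nat.mul_factorial_pred (by omega)
    have e3 : (k:ℝ) * (((k-1).factorial * n.factorial : ℝ) / (n+k).factorial)
        = ((k.factorial * n.factorial : ℕ) : ℝ) / ((n+k).factorial : ℝ) := by
      push_cast
      rw [mul_div_assoc']
      congr 1
      rw [← mul_assoc, hk']
    rw [e3, ENNReal.ofReal_div_of_pos (by positivity), ENNReal.ofReal_natCast,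
      ENNReal.ofReal_natCast, Nat.cast_mul]
  calc ((k.factorial : ℝ≥0∞) * n.factorial / (n + k).factorial)
        * volume A ^ ((k:ℝ)/n) * volume C
      = ENNReal.ofReal (k:ℝ)
          * (volume C * ENNReal.ofReal (∫ t in Set.Ioo (0:ℝ) N, φ t)) := by
        rw [hβ, hconst, ← hNk,
          ENNReal.ofReal_mul (le_of_lt hkR),
          ENNReal.ofReal_mul (by positivity : (0:ℝ) ≤ N^k)]
        ring
    _ ≤ ENNReal.ofReal (k:ℝ) * ∫⁻ t in Set.Ioi (0:ℝ),
          (volume.restrict C) {a | t ≤ f a} * ENNReal.ofReal (t ^ ((k:ℝ)-1)) :=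
        mul_le_mul_right step2 _
    _ = ∫⁻ x in C, F x ^ ((k:ℝ)/n) := main.symm
end

section
/- Let $L > 0$ and let $A_L = \{(x_1, \dots, x_n) \in \mathbb{R}^n : x_j \ge 0 \text{ for all } j, \ \sum_{j=1}^n x_j \le L\}$ be the $n$-dimensional simplex of side $L$. Then $\mu(A_L + A_L) = 2^n \mu(A_L)$ and $\mu(A_L - A_L) = \binom{2n}{n} \mu(A_L)$, where $\mu(A_L) = L^n/n!$. -/
open MeasureTheory Pointwise Set

lemma meas_simplex {ι : Type*} [Fintype ι] (L : ℝ) :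
    MeasurableSet {x : ι → ℝ | (∀ j, 0 ≤ x j) ∧ ∑ j, x j ≤ L} := by
  have h1 : MeasurableSet {x : ι → ℝ | ∀ j, 0 ≤ x j} := by
    rw [Set.setOf_forall]
    exact MeasurableSet.iInter fun j => measurableSet_le measurable_const (measurable_pi_apply j)
  have h2 : MeasurableSet {x : ι → ℝ | ∑ j, x j ≤ L} :=
    measurableSet_le (Finset.measurable_sum _ fun j _ => measurable_pi_apply j) measurable_const
  exact h1.inter h2

lemma simplex_vol_fin : ∀ (n : ℕ) (L : ℝ), 0 ≤ L →
    volume {x : Fin n → ℝ | (∀ j, 0 ≤ x j) ∧ ∑ j, x j ≤ L} =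
      ENNReal.ofReal (L ^ n / n.factorial) := by
  intro n
  induction n with
  | zero =>
    intro L hL
    have : {x : Fin 0 → ℝ | (∀ j, 0 ≤ x j) ∧ ∑ j, x j ≤ L} = Set.univ := by
      ext x
      simp [hL]
    rw [this]
    rw [volume_pi, Measure.pi_univ]
    simp
  | succ n ih =>
    intro L hL
    have hmp := volume_preserving_piFinSuccAbove (fun _ : Fin (n+1) => ℝ) 0
    set e := MeasurableEquiv.piFinSuccAbove (fun _ : Fin (n+1) => ℝ) 0 with he
    set T : Set (ℝ × (Fin n → ℝ)) :=
      {p | (0 ≤ p.1 ∧ ∀ j, 0 ≤ p.2 j) ∧ p.1 + ∑ j, p.2 j ≤ L} with hT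
    have hTm : MeasurableSet T := by
      have h1 : MeasurableSet {p : ℝ × (Fin n → ℝ) | 0 ≤ p.1} :=
        measurableSet_le measurable_const measurable_fst
      have h2 : MeasurableSet {p : ℝ × (Fin n → ℝ) | ∀ j, 0 ≤ p.2 j} := by
        rw [Set.setOf_forall]
        exact MeasurableSet.iInter fun j =>
          measurableSet_le measurable_const ((measurable_pi_apply j).comp' measurable_snd)
      have h3 : MeasurableSet {p : ℝ × (Fin n → ℝ) | p.1 + ∑ j, p.2 j ≤ L} :=
        measurableSet_le (measurable_fst.add
          (Finset.measurable_sum _ fun j _ => (measurable_pi_apply j).comp' measurable_snd))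
          measurable_const
      exact (h1.inter h2).inter h3
    have hpre : e ⁻¹' T = {x : Fin (n+1) → ℝ | (∀ j, 0 ≤ x j) ∧ ∑ j, x j ≤ L} := by
      ext x
      have hx : e x = (x 0, fun j => x (Fin.succAbove 0 j)) := rfl
      simp only [Set.mem_preimage, hx, hT, Set.mem_setOf_eq, Fin.sum_univ_succAbove _ 0]
      rw [Fin.forall_iff_succAbove 0]
    rw [← hpre, hmp.measure_preimage hTm.nullMeasurableSet, Measure.volume_eq_prod,
      Measure.prod_apply hTm]
    have hslice : (fun t => volume (Prod.mk t ⁻¹' T)) =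
        Set.indicator (Icc 0 L) (fun t => ENNReal.ofReal ((L - t) ^ n / n.factorial)) := by
      funext t
      by_cases ht : t ∈ Icc 0 L
      · rw [Set.indicator_of_mem ht]
        have : Prod.mk t ⁻¹' T = {y : Fin n → ℝ | (∀ j, 0 ≤ y j) ∧ ∑ j, y j ≤ L - t} := by
          ext y
          simp only [Set.mem_preimage, hT, Set.mem_setOf_eq]
          constructor
          · rintro ⟨⟨-, h2⟩, h3⟩; exact ⟨h2, by linarith⟩
          · rintro ⟨h2, h3⟩; exact ⟨⟨ht.1, h2⟩, by linarith⟩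
        rw [this, ih (L - t) (by linarith [ht.2])]
      · rw [Set.indicator_of_notMem ht]
        have : Prod.mk t ⁻¹' T = ∅ := by
          ext y
          simp only [Set.mem_preimage, hT, Set.mem_setOf_eq, Set.mem_empty_iff_false, iff_false]
          rintro ⟨⟨h1, h2⟩, h3⟩
          have : 0 ≤ ∑ j, y j := Finset.sum_nonneg fun j _ => h2 j
          simp only [Set.mem_Icc, not_and, not_le] at ht
          linarith [ht h1]
        rw [this]; simp
    rw [hslice, lintegral_indicator measurableSet_Icc]
    rw [setLIntegral_congr (Ioc_ae_eq_Icc (μ := volume) (a := (0:ℝ)) (b := L)).symm]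
    have hint : IntegrableOn (fun t : ℝ => (L - t) ^ n / n.factorial) (Ioc 0 L) := by
      apply Continuous.integrableOn_Ioc
      fun_prop
    have hnn : 0 ≤ᵐ[volume.restrict (Ioc 0 L)] fun t : ℝ => (L - t) ^ n / n.factorial := by
      rw [Filter.EventuallyLE, ae_restrict_iff' measurableSet_Ioc]
      filter_upwards with t ht
      have : 0 ≤ L - t := by linarith [ht.2]
      positivity
    rw [← ofReal_integral_eq_lintegral_ofReal hint hnn]
    congr 1
    rw [← intervalIntegral.integral_of_le hL]
    rw [intervalIntegral.integral_comp_sub_left (fun t : ℝ => t ^ n / n.factorial) L]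
    simp only [sub_zero, sub_self]
    rw [intervalIntegral.integral_div, integral_pow]
    rw [Nat.factorial_succ]
    push_cast
    have h1 : (0:ℝ) < (n:ℝ) + 1 := by positivity
    have h2 : (0:ℝ) < (n.factorial : ℝ) := by positivity
    field_simp
    simp

lemma simplex_vol {ι : Type} [Fintype ι] (L : ℝ) (hL : 0 ≤ L) :
    volume {x : ι → ℝ | (∀ j, 0 ≤ x j) ∧ ∑ j, x j ≤ L} =
      ENNReal.ofReal (L ^ (Fintype.card ι) / (Fintype.card ι).factorial) := by
  set c := Fintype.card ι
  set f := (Fintype.equivFin ι).symm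
  have hmp := volume_measurePreserving_piCongrLeft (fun _ : ι => ℝ) f
  set e := MeasurableEquiv.piCongrLeft (fun _ : ι => ℝ) f with he
  rw [← hmp.measure_preimage (meas_simplex L).nullMeasurableSet]
  have hpre : ⇑e ⁻¹' {x : ι → ℝ | (∀ j, 0 ≤ x j) ∧ ∑ j, x j ≤ L} =
      {y : Fin c → ℝ | (∀ j, 0 ≤ y j) ∧ ∑ j, y j ≤ L} := by
    ext y
    have hey : ∀ j, e y j = y (f.symm j) := by
      intro j
      rw [he]
      rw [MeasurableEquiv.coe_piCongrLeft]
      rw [Equiv.piCongrLeft_apply_eq_cast]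
      rfl
    have hsum : ∑ j : ι, e y j = ∑ j : Fin c, y j := by
      rw [← Equiv.sum_comp f (fun j => e y j)]
      exact Finset.sum_congr rfl fun j _ => by rw [hey, Equiv.symm_apply_apply]
    simp only [Set.mem_preimage, Set.mem_setOf_eq]
    constructor
    · rintro ⟨h1, h2⟩
      refine ⟨fun j => ?_, by rw [← hsum]; exact h2⟩
      have := h1 (f j); rwa [hey, Equiv.symm_apply_apply] at this
    · rintro ⟨h1, h2⟩
      exact ⟨fun j => by rw [hey]; exact h1 _, by rw [hsum]; exact h2⟩
  rw [hpre, simplex_vol_fin c L hL]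

lemma diff_vol_piece {n : ℕ} (L : ℝ) (hL : 0 ≤ L) (s : Finset (Fin n)) :
    volume ({x : Fin n → ℝ | ∑ j, max (x j) 0 ≤ L ∧ ∑ j, max (-x j) 0 ≤ L} ∩
        {x : Fin n → ℝ | ∀ j, (0 ≤ x j ↔ j ∈ s)}) =
      ENNReal.ofReal (L ^ s.card / s.card.factorial) *
        ENNReal.ofReal (L ^ (n - s.card) / (n - s.card).factorial) := by
  set D : Set (Fin n → ℝ) :=
    {x | ∑ j, max (x j) 0 ≤ L ∧ ∑ j, max (-x j) 0 ≤ L} with hD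
  set O : Set (Fin n → ℝ) := {x | ∀ j, (0 ≤ x j ↔ j ∈ s)} with hO
  have hDm : MeasurableSet D := by
    apply MeasurableSet.inter
    · exact measurableSet_le (Finset.measurable_sum _ fun j _ =>
        (measurable_pi_apply j).max measurable_const) measurable_const
    · exact measurableSet_le (Finset.measurable_sum _ fun j _ =>
        (measurable_pi_apply j).neg.max measurable_const) measurable_const
  have hOm : MeasurableSet O := by
    have : O = ⋂ j, {x : Fin n → ℝ | 0 ≤ x j ↔ j ∈ s} := by
      ext x; simp [hO, Set.mem_iInter]
    rw [this]
    refine MeasurableSet.iInter fun j => ?_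
    by_cases hj : j ∈ s
    · simp only [hj, iff_true]
      exact measurableSet_le measurable_const (measurable_pi_apply j)
    · simp only [hj, iff_false, not_le]
      exact measurableSet_lt (measurable_pi_apply j) measurable_const
  -- the sign-flip map
  set T : (Fin n → ℝ) → (Fin n → ℝ) := fun x j => if j ∈ s then x j else -(x j) with hTdef
  have hT : MeasurePreserving T volume volume := by
    have hTg : ∀ j : Fin n, MeasurePreserving
        (fun t : ℝ => if j ∈ s then t else -t) volume volume := by
      intro j
      by_cases h : j ∈ s
      · simp only [h, if_true]
        exact MeasurePreserving.id (volume : Measure ℝ)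
      · simpa [h] using Measure.measurePreserving_neg (volume : Measure ℝ)
    exact volume_preserving_pi fun j => hTg j
  rw [← hT.measure_preimage (hDm.inter hOm).nullMeasurableSet]
  set B : Set (Fin n → ℝ) := T ⁻¹' (D ∩ O) with hB
  set P : Set (Fin n → ℝ) :=
    {y | (∀ j, 0 ≤ y j) ∧ ∑ j ∈ s, y j ≤ L ∧ ∑ j ∈ sᶜ, y j ≤ L} with hP
  -- sums simplify for sign-definite vectors
  have hsum1 : ∀ y : Fin n → ℝ, (∀ j, 0 ≤ y j) →
      ∑ j, max (T y j) 0 = ∑ j ∈ s, y j := by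
    intro y hy
    rw [← Finset.sum_add_sum_compl s]
    have e1 : ∑ j ∈ s, max (T y j) 0 = ∑ j ∈ s, y j :=
      Finset.sum_congr rfl fun j hj => by
        simp [hTdef, hj, max_eq_left (hy j)]
    have e2 : ∑ j ∈ sᶜ, max (T y j) 0 = 0 := by
      refine Finset.sum_eq_zero fun j hj => ?_
      have hj' : j ∉ s := Finset.mem_compl.mp hj
      simp [hTdef, hj', max_eq_right (neg_nonpos.mpr (hy j))]
    rw [e1, e2, add_zero]
  have hsum2 : ∀ y : Fin n → ℝ, (∀ j, 0 ≤ y j) →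
      ∑ j, max (-(T y j)) 0 = ∑ j ∈ sᶜ, y j := by
    intro y hy
    rw [← Finset.sum_add_sum_compl s]
    have e1 : ∑ j ∈ s, max (-(T y j)) 0 = 0 := by
      refine Finset.sum_eq_zero fun j hj => ?_
      simp [hTdef, hj, max_eq_right (neg_nonpos.mpr (hy j))]
    have e2 : ∑ j ∈ sᶜ, max (-(T y j)) 0 = ∑ j ∈ sᶜ, y j :=
      Finset.sum_congr rfl fun j hj => by
        have hj' : j ∉ s := Finset.mem_compl.mp hj
        simp [hTdef, hj', max_eq_left (hy j)]
    rw [e1, e2, zero_add]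
  have hBsub : B ⊆ P := by
    rintro y ⟨⟨hd1, hd2⟩, ho⟩
    have hy : ∀ j, 0 ≤ y j := by
      intro j
      by_cases hj : j ∈ s
      · have := (ho j).mpr hj
        simpa [hTdef, hj] using this
      · have : ¬ (0 ≤ T y j) := fun h => hj ((ho j).mp h)
        simp only [hTdef, hj, if_false, not_le, neg_neg, Left.neg_neg_iff] at this
        exact le_of_lt this
    refine ⟨hy, ?_, ?_⟩
    · rw [← hsum1 y hy]; exact hd1
    · rw [← hsum2 y hy]; exact hd2
  have hB' : ∀ y, (∀ j, 0 ≤ y j) → (∀ j, j ∉ s → 0 < y j) →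
      (∑ j ∈ s, y j ≤ L) → (∑ j ∈ sᶜ, y j ≤ L) → y ∈ B := by
    intro y hy hy' h1 h2
    refine ⟨⟨?_, ?_⟩, ?_⟩
    · rw [hsum1 y hy]; exact h1
    · rw [hsum2 y hy]; exact h2
    · intro j
      by_cases hj : j ∈ s
      · simp [hTdef, hj, hy j]
      · simp only [hTdef, hj, if_false, iff_false, not_le, Left.neg_neg_iff]
        exact hy' j hj
  have hPB : P \ B ⊆ ⋃ j, {y : Fin n → ℝ | y j = 0} := by
    rintro y ⟨⟨hy, h1, h2⟩, hyB⟩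
    by_contra hc
    simp only [Set.mem_iUnion, Set.mem_setOf_eq, not_exists] at hc
    exact hyB (hB' y hy (fun j _ => lt_of_le_of_ne (hy j) (Ne.symm (hc j))) h1 h2)
  have hnull : volume (⋃ j, {y : Fin n → ℝ | y j = 0}) = 0 :=
    measure_iUnion_null fun j => by
      rw [volume_pi]; exact Measure.pi_hyperplane _ j 0
  have hBP : volume B = volume P := by
    refine le_antisymm (measure_mono hBsub) ?_
    calc volume P = volume (B ∪ (P \ B)) := by rw [Set.union_diff_cancel hBsub]
      _ ≤ volume B + volume (P \ B) := measure_union_le _ _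
      _ ≤ volume B + 0 := by
          gcongr
          exact le_of_le_of_eq (measure_mono hPB) hnull
      _ = volume B := add_zero _
  rw [hBP]
  -- split coordinates
  have hm2 := volume_preserving_piEquivPiSubtypeProd (fun _ : Fin n => ℝ) (· ∈ s)
  set Δ1 : Set ({j : Fin n // j ∈ s} → ℝ) :=
    {u | (∀ i, 0 ≤ u i) ∧ ∑ i, u i ≤ L} with hΔ1
  set Δ2 : Set ({j : Fin n // ¬ j ∈ s} → ℝ) :=
    {u | (∀ i, 0 ≤ u i) ∧ ∑ i, u i ≤ L} with hΔ2
  have hPpre : P = (MeasurableEquiv.piEquivPiSubtypeProd (fun _ : Fin n => ℝ) (· ∈ s)) ⁻¹'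
      (Δ1 ×ˢ Δ2) := by
    ext y
    have hs1 : ∑ j ∈ s, y j = ∑ i : {j : Fin n // j ∈ s}, y i :=
      Finset.sum_subtype s (fun x => Iff.rfl) y
    have hs2 : ∑ j ∈ sᶜ, y j = ∑ i : {j : Fin n // ¬ j ∈ s}, y i :=
      Finset.sum_subtype sᶜ (fun x => Finset.mem_compl) y
    simp only [hP, Set.mem_setOf_eq, Set.mem_preimage, Set.mem_prod,
      MeasurableEquiv.piEquivPiSubtypeProd, MeasurableEquiv.coe_mk,
      Equiv.piEquivPiSubtypeProd_apply, hΔ1, hΔ2]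
    constructor
    · rintro ⟨hy, h1, h2⟩
      exact ⟨⟨fun i => hy i, by rw [← hs1]; exact h1⟩,
        ⟨fun i => hy i, by rw [← hs2]; exact h2⟩⟩
    · rintro ⟨⟨ha1, ha2⟩, ⟨hb1, hb2⟩⟩
      refine ⟨fun j => ?_, by rw [hs1]; exact ha2, by rw [hs2]; exact hb2⟩
      by_cases hj : j ∈ s
      · exact ha1 ⟨j, hj⟩
      · exact hb1 ⟨j, hj⟩
  rw [hPpre, hm2.measure_preimage (((meas_simplex L).prod (meas_simplex L)).nullMeasurableSet)]
  rw [Measure.volume_eq_prod, Measure.prod_prod]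
  have h1 := simplex_vol (ι := {j : Fin n // j ∈ s}) L hL
  have h2 := simplex_vol (ι := {j : Fin n // ¬ j ∈ s}) L hL
  rw [Fintype.card_coe] at h1
  have hc : Fintype.card {j : Fin n // ¬ j ∈ s} = n - s.card := by
    rw [Fintype.card_subtype_compl, Fintype.card_fin, Fintype.card_coe]
  rw [hc] at h2
  convert congrArg₂ (· * ·) h1 h2 using 2 <;> congr!

lemma diff_vol {n : ℕ} (L : ℝ) (hL : 0 ≤ L) :
    volume {x : Fin n → ℝ | ∑ j, max (x j) 0 ≤ L ∧ ∑ j, max (-x j) 0 ≤ L} =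
      (Nat.choose (2 * n) n) * ENNReal.ofReal (L ^ n / n.factorial) := by
  classical
  set D : Set (Fin n → ℝ) :=
    {x | ∑ j, max (x j) 0 ≤ L ∧ ∑ j, max (-x j) 0 ≤ L} with hD
  set O : Finset (Fin n) → Set (Fin n → ℝ) :=
    fun s => {x | ∀ j, (0 ≤ x j ↔ j ∈ s)} with hO
  have hDm : MeasurableSet D := by
    apply MeasurableSet.inter
    · exact measurableSet_le (Finset.measurable_sum _ fun j _ =>
        (measurable_pi_apply j).max measurable_const) measurable_const
    · exact measurableSet_le (Finset.measurable_sum _ fun j _ =>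
        (measurable_pi_apply j).neg.max measurable_const) measurable_const
  have hOm : ∀ s, MeasurableSet (O s) := by
    intro s
    have : O s = ⋂ j, {x : Fin n → ℝ | 0 ≤ x j ↔ j ∈ s} := by
      ext x; simp [hO, Set.mem_iInter]
    rw [this]
    refine MeasurableSet.iInter fun j => ?_
    by_cases hj : j ∈ s
    · simp only [hj, iff_true]
      exact measurableSet_le measurable_const (measurable_pi_apply j)
    · simp only [hj, iff_false, not_le]
      exact measurableSet_lt (measurable_pi_apply j) measurable_const
  have hcover : D = ⋃ s : Finset (Fin n), D ∩ O s := by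
    ext x
    simp only [Set.mem_iUnion, Set.mem_inter_iff]
    constructor
    · intro hx
      exact ⟨Finset.univ.filter (fun j => 0 ≤ x j), hx, fun j => by simp [hO]⟩
    · rintro ⟨s, hx, -⟩; exact hx
  have hdisj : Pairwise (Function.onFun Disjoint fun s : Finset (Fin n) => D ∩ O s) := by
    intro s t hst
    simp only [Function.onFun]
    rw [Set.disjoint_left]
    rintro x ⟨-, hxs⟩ ⟨-, hxt⟩
    exact hst (Finset.ext fun j => ((hO ▸ hxs) j).symm.trans ((hO ▸ hxt) j))
  rw [hcover, measure_iUnion hdisj fun s => hDm.inter (hOm s), tsum_fintype]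
  have hpieces : ∀ s : Finset (Fin n), volume (D ∩ O s) =
      ENNReal.ofReal (L ^ s.card / s.card.factorial) *
        ENNReal.ofReal (L ^ (n - s.card) / (n - s.card).factorial) :=
    fun s => diff_vol_piece L hL s
  rw [Finset.sum_congr rfl fun s _ => hpieces s]
  -- now a pure computation
  have hterm : ∀ s : Finset (Fin n),
      ENNReal.ofReal (L ^ s.card / s.card.factorial) *
        ENNReal.ofReal (L ^ (n - s.card) / (n - s.card).factorial) =
      ENNReal.ofReal (L ^ s.card / s.card.factorial *
        (L ^ (n - s.card) / (n - s.card).factorial)) := by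
    intro s
    rw [ENNReal.ofReal_mul (by positivity)]
  rw [Finset.sum_congr rfl fun s _ => hterm s]
  rw [← ENNReal.ofReal_sum_of_nonneg (fun s _ => by positivity)]
  have hreal : ∑ s : Finset (Fin n),
      L ^ s.card / s.card.factorial * (L ^ (n - s.card) / (n - s.card).factorial) =
      ((2 * n).choose n : ℝ) * (L ^ n / n.factorial) := by
    have h1 : ∑ s : Finset (Fin n),
        L ^ s.card / s.card.factorial * (L ^ (n - s.card) / (n - s.card).factorial) =
        ∑ k ∈ Finset.range (n + 1), n.choose k •
          (L ^ k / k.factorial * (L ^ (n - k) / (n - k).factorial)) := by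
      rw [← Finset.powerset_univ, Finset.sum_powerset_apply_card
        (fun k => L ^ k / k.factorial * (L ^ (n - k) / (n - k).factorial))]
      simp [Finset.card_univ]
    rw [h1]
    have h2 : ∀ k ∈ Finset.range (n + 1), n.choose k •
        (L ^ k / k.factorial * (L ^ (n - k) / (n - k).factorial)) =
        (n.choose k ^ 2 : ℕ) * (L ^ n / n.factorial) := by
      intro k hk
      have hkn : k ≤ n := Nat.lt_succ_iff.mp (Finset.mem_range.mp hk)
      have hfac : ((n.choose k : ℝ)) * k.factorial * (n - k).factorial = n.factorial := by
        exact_mod_cast congrArg Nat.cast (Nat.choose_mul_factorial_mul_factorial hkn)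
      have hpow : L ^ k * L ^ (n - k) = L ^ n := by
        rw [← pow_add, Nat.add_sub_cancel' hkn]
      rw [nsmul_eq_mul]
      push_cast
      rw [div_mul_div_comm, hpow]
      field_simp
      linear_combination (-(↑(n.choose k) * L ^ n)) * hfac
    rw [Finset.sum_congr rfl h2, ← Finset.sum_mul]
    congr 1
    have hv : ∑ k ∈ Finset.range (n + 1), n.choose k ^ 2 = (2 * n).choose n := by
      rw [two_mul, Nat.add_choose_eq]
      rw [Finset.Nat.sum_antidiagonal_eq_sum_range_succ (fun i j => n.choose i * n.choose j)]
      exact Finset.sum_congr rfl fun k hk => by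
        rw [sq, Nat.choose_symm (Nat.lt_succ_iff.mp (Finset.mem_range.mp hk))]
    push_cast [← hv]
    ring
  rw [hreal, ENNReal.ofReal_mul (by positivity)]
  congr 1
  simp

theorem simplex_sumset_diffset_volume {n : ℕ} (L : ℝ) (hL : 0 < L)
    (A : Set (Fin n → ℝ))
    (hA : A = {x : Fin n → ℝ | (∀ j, 0 ≤ x j) ∧ ∑ j, x j ≤ L}) :
    volume (A + A) = 2 ^ n * volume A ∧
    volume (A - A) = (Nat.choose (2 * n) n) * volume A ∧
    volume A = ENNReal.ofReal (L ^ n / n.factorial) := by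
  have hvolA : volume A = ENNReal.ofReal (L ^ n / n.factorial) := by
    rw [hA]; exact simplex_vol_fin n L hL.le
  refine ⟨?_, ?_, hvolA⟩
  · -- sumset
    have hsum : A + A = {x : Fin n → ℝ | (∀ j, 0 ≤ x j) ∧ ∑ j, x j ≤ 2 * L} := by
      rw [hA]
      ext x
      simp only [Set.mem_add, Set.mem_setOf_eq]
      constructor
      · rintro ⟨a, ⟨ha1, ha2⟩, b, ⟨hb1, hb2⟩, rfl⟩
        refine ⟨fun j => add_nonneg (ha1 j) (hb1 j), ?_⟩
        have : ∑ j, (a + b) j = ∑ j, a j + ∑ j, b j := by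
          simp [Finset.sum_add_distrib]
        rw [this]; linarith
      · rintro ⟨h1, h2⟩
        refine ⟨fun j => x j / 2, ⟨fun j => div_nonneg (h1 j) (by norm_num), ?_⟩,
          fun j => x j / 2, ⟨fun j => div_nonneg (h1 j) (by norm_num), ?_⟩, ?_⟩
        · rw [← Finset.sum_div]; linarith
        · rw [← Finset.sum_div]; linarith
        · funext j; exact add_halves (x j)
    rw [hsum, simplex_vol_fin n (2 * L) (by positivity), hvolA]
    rw [mul_pow, mul_div_assoc, ENNReal.ofReal_mul (by positivity),
      ENNReal.ofReal_pow (by norm_num)]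
    norm_num
  · -- diffset
    have hdiff : A - A =
        {x : Fin n → ℝ | ∑ j, max (x j) 0 ≤ L ∧ ∑ j, max (-x j) 0 ≤ L} := by
      rw [hA]
      ext x
      simp only [Set.mem_sub, Set.mem_setOf_eq]
      constructor
      · rintro ⟨a, ⟨ha1, ha2⟩, b, ⟨hb1, hb2⟩, rfl⟩
        constructor
        · calc ∑ j, max ((a - b) j) 0 ≤ ∑ j, a j :=
                Finset.sum_le_sum fun j _ => max_le
                  (by simpa using sub_le_self (a j) (hb1 j)) (ha1 j)
            _ ≤ L := ha2
        · calc ∑ j, max (-(a - b) j) 0 ≤ ∑ j, b j :=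
                Finset.sum_le_sum fun j _ => max_le
                  (by simpa using sub_le_self (b j) (ha1 j)) (hb1 j)
            _ ≤ L := hb2
      · rintro ⟨h1, h2⟩
        refine ⟨fun j => max (x j) 0, ⟨fun j => le_max_right _ _, h1⟩,
          fun j => max (-x j) 0, ⟨fun j => le_max_right _ _, h2⟩, ?_⟩
        funext j
        simp only [Pi.sub_apply]
        exact max_zero_sub_max_neg_zero_eq_self (x j)
    rw [hdiff, diff_vol L hL.le, hvolA]
end

section
/- There exists an absolute constant $c > 0$ (independent of $n$) such that for every integer $n \ge 1$ and every $L > 0$, the $n$-dimensional simplex $A = \{(x_1, \dots, x_n) \in \mathbb{R}^n : x_j \ge 0 \text{ for all } j, \ \sum_{j=1}^n x_j \le L\}$ satisfies $\mu(A - A) \ge c\, \frac{\mu(A+A)^2}{\sqrt{n}\, \mu(A)}$; that is, the bound $\mu(A-A) \ll \mu(A+B)^2 / (\sqrt{n}\,\mu(A))$ is tight up to an absolute constant. -/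
open MeasureTheory Pointwise

noncomputable section SimplexAux

/-- The solid simplex with side `L` in `ι → ℝ`. -/
def simSet (ι : Type*) [Fintype ι] (L : ℝ) : Set (ι → ℝ) :=
  {x | (∀ j, 0 ≤ x j) ∧ ∑ j, x j ≤ L}

lemma measurableSet_simSet (ι : Type*) [Fintype ι] (L : ℝ) :
    MeasurableSet (simSet ι L) := by
  have h1 : MeasurableSet {x : ι → ℝ | ∀ j, 0 ≤ x j} := by
    rw [Set.setOf_forall]
    exact MeasurableSet.iInter fun j => measurableSet_le measurable_const (measurable_pi_apply j)
  have h2 : MeasurableSet {x : ι → ℝ | ∑ j, x j ≤ L} :=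
    measurableSet_le (Finset.measurable_sum _ fun j _ => measurable_pi_apply j) measurable_const
  have : simSet ι L = {x : ι → ℝ | ∀ j, 0 ≤ x j} ∩ {x : ι → ℝ | ∑ j, x j ≤ L} := by
    ext x; simp [simSet, Set.mem_setOf_eq, Set.mem_inter_iff]
  rw [this]; exact h1.inter h2

lemma volume_simSet_fin (n : ℕ) (L : ℝ) :
    volume (simSet (Fin n) L)
      = if 0 ≤ L then ENNReal.ofReal (L ^ n / n.factorial) else 0 := by
  induction n generalizing L with
  | zero =>
    by_cases hL : 0 ≤ L
    · rw [if_pos hL]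
      have : simSet (Fin 0) L = Set.univ := by
        ext x; simp [simSet, hL]
      rw [this]
      simp [volume_pi, Measure.pi_univ]
    · rw [if_neg hL]
      have : simSet (Fin 0) L = ∅ := by
        ext x; simp [simSet]; linarith
      simp [this]
  | succ n ih =>
    set T : Set (ℝ × (Fin n → ℝ)) :=
      {p | 0 ≤ p.1 ∧ p.2 ∈ simSet (Fin n) (L - p.1)} with hT
    have hTmeas : MeasurableSet T := by
      have h1 : MeasurableSet {p : ℝ × (Fin n → ℝ) | 0 ≤ p.1} :=
        measurableSet_le measurable_const measurable_fst
      have h2 : MeasurableSet {p : ℝ × (Fin n → ℝ) | ∀ j, 0 ≤ p.2 j} := by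
        rw [Set.setOf_forall]
        exact MeasurableSet.iInter fun j =>
          measurableSet_le measurable_const (measurable_snd.eval)
      have h3 : MeasurableSet {p : ℝ × (Fin n → ℝ) | ∑ j, p.2 j ≤ L - p.1} := by
        apply measurableSet_le
        · exact Finset.measurable_sum _ fun j _ => (measurable_pi_apply j).comp measurable_snd
        · exact measurable_const.sub measurable_fst
      have : T = {p : ℝ × (Fin n → ℝ) | 0 ≤ p.1} ∩
          ({p | ∀ j, 0 ≤ p.2 j} ∩ {p | ∑ j, p.2 j ≤ L - p.1}) := by
        ext p; simp [hT, simSet, Set.mem_setOf_eq, and_assoc]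
      rw [this]; exact h1.inter (h2.inter h3)
    have mp := volume_preserving_piFinSuccAbove (fun _ : Fin (n+1) => ℝ) 0
    have hpre : (MeasurableEquiv.piFinSuccAbove (fun _ : Fin (n+1) => ℝ) 0) ⁻¹' T
        = simSet (Fin (n+1)) L := by
      ext x
      have happ : (MeasurableEquiv.piFinSuccAbove (fun _ : Fin (n+1) => ℝ) 0) x
          = (x 0, fun j => x j.succ) := rfl
      simp only [Set.mem_preimage, happ, hT, Set.mem_setOf_eq, simSet]
      constructor
      · rintro ⟨h0, hpos, hsum⟩
        refine ⟨?_, ?_⟩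
        · intro j
          refine Fin.cases h0 (fun i => hpos i) j
        · rw [Fin.sum_univ_succ]; linarith
      · rintro ⟨hpos, hsum⟩
        rw [Fin.sum_univ_succ] at hsum
        exact ⟨hpos 0, fun j => hpos j.succ, by linarith⟩
    have hvol : volume (simSet (Fin (n+1)) L) = volume T := by
      rw [← hpre]
      exact mp.measure_preimage hTmeas.nullMeasurableSet
    rw [hvol, Measure.volume_eq_prod, Measure.prod_apply hTmeas]
    have hslice : ∀ t : ℝ, volume (Prod.mk t ⁻¹' T)
        = ENNReal.ofReal ((Set.Icc (0:ℝ) L).indicator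
            (fun t => (L - t) ^ n / n.factorial) t) := by
      intro t
      by_cases ht : 0 ≤ t
      · have : Prod.mk t ⁻¹' T = simSet (Fin n) (L - t) := by
          ext y; simp [hT, Set.mem_preimage, Set.mem_setOf_eq, ht]
        rw [this, ih]
        by_cases htL : t ≤ L
        · rw [if_pos (by linarith), Set.indicator_of_mem (Set.mem_Icc.2 ⟨ht, htL⟩)]
        · rw [if_neg (by linarith), Set.indicator_of_notMem (by simp [Set.mem_Icc, htL]),
            ENNReal.ofReal_zero]
      · have : Prod.mk t ⁻¹' T = ∅ := by
          ext y; simp [hT, Set.mem_preimage, Set.mem_setOf_eq, ht]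
        rw [this, measure_empty,
          Set.indicator_of_notMem (by simp [Set.mem_Icc, ht]), ENNReal.ofReal_zero]
    simp only [hslice]
    by_cases hL : 0 ≤ L
    · rw [if_pos hL]
      have hcont : ContinuousOn (fun t : ℝ => (L - t) ^ n / n.factorial) (Set.Icc 0 L) :=
        (((continuous_const.sub continuous_id).pow n).div_const _).continuousOn
      have hint : Integrable ((Set.Icc (0:ℝ) L).indicator
          (fun t => (L - t) ^ n / n.factorial)) := by
        exact (hcont.integrableOn_Icc).integrable_indicator measurableSet_Icc
      have hnonneg : 0 ≤ᵐ[volume] (Set.Icc (0:ℝ) L).indicator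
          (fun t => (L - t) ^ n / n.factorial) := by
        refine Filter.Eventually.of_forall fun t => ?_
        apply Set.indicator_nonneg
        intro y hy
        have : 0 ≤ L - y := by simp [Set.mem_Icc] at hy; linarith [hy.2]
        positivity
      rw [← ofReal_integral_eq_lintegral_ofReal hint hnonneg]
      congr 1
      rw [MeasureTheory.integral_indicator measurableSet_Icc,
        MeasureTheory.integral_Icc_eq_integral_Ioc,
        ← intervalIntegral.integral_of_le hL]
      have : ∫ t in (0:ℝ)..L, (L - t) ^ n / n.factorial
          = (∫ t in (0:ℝ)..L, (L - t) ^ n) / n.factorial := by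
        rw [intervalIntegral.integral_div]
      rw [this]
      have hsub : ∫ t in (0:ℝ)..L, (L - t) ^ n = ∫ u in (L - L)..(L - 0), u ^ n :=
        intervalIntegral.integral_comp_sub_left (fun u => u ^ n) L
      rw [hsub]
      simp only [sub_self, sub_zero, integral_pow]
      rw [Nat.factorial_succ]
      push_cast
      field_simp
      simp
    · rw [if_neg hL]
      have : ∀ t : ℝ, (Set.Icc (0:ℝ) L).indicator
          (fun t => (L - t) ^ n / n.factorial) t = 0 := by
        intro t
        have : Set.Icc (0:ℝ) L = ∅ := Set.Icc_eq_empty (by linarith)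
        simp [this]
      simp only [this, ENNReal.ofReal_zero, lintegral_const, zero_mul]

end SimplexAux
section Part2
open MeasureTheory Pointwise

lemma volume_simSet (ι : Type) [Fintype ι] (L : ℝ) (hL : 0 ≤ L) :
    volume (simSet ι L)
      = ENNReal.ofReal (L ^ (Fintype.card ι) / (Fintype.card ι).factorial) := by
  classical
  set f := (Fintype.equivFin ι).symm with hf
  have mp := volume_measurePreserving_piCongrLeft (fun _ : ι => ℝ) f
  have hpre : (MeasurableEquiv.piCongrLeft (fun _ : ι => ℝ) f) ⁻¹' (simSet ι L)
      = simSet (Fin (Fintype.card ι)) L := by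
    ext x
    have happ : ∀ i : ι, (MeasurableEquiv.piCongrLeft (fun _ : ι => ℝ) f) x i
        = x (f.symm i) := by
      intro i
      simp [MeasurableEquiv.piCongrLeft, Equiv.piCongrLeft]
    simp only [Set.mem_preimage, simSet, Set.mem_setOf_eq]
    constructor
    · rintro ⟨h1, h2⟩
      refine ⟨fun j => by simpa [happ] using h1 (f j), ?_⟩
      have : ∑ i : ι, (MeasurableEquiv.piCongrLeft (fun _ : ι => ℝ) f) x i
          = ∑ j : Fin (Fintype.card ι), x j := by
        simp only [happ]
        exact Fintype.sum_equiv f.symm _ _ fun i => rfl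
      linarith [this ▸ h2]
    · rintro ⟨h1, h2⟩
      refine ⟨fun i => by simpa [happ] using h1 (f.symm i), ?_⟩
      have : ∑ i : ι, (MeasurableEquiv.piCongrLeft (fun _ : ι => ℝ) f) x i
          = ∑ j : Fin (Fintype.card ι), x j := by
        simp only [happ]
        exact Fintype.sum_equiv f.symm _ _ fun i => rfl
      linarith [this]
  have := mp.measure_preimage ((measurableSet_simSet ι L).nullMeasurableSet)
  rw [hpre] at this
  rw [← this, volume_simSet_fin, if_pos hL]

lemma volume_simSet' (κ : Type) (i1 i2 : Fintype κ) (m : ℕ) (hm : @Fintype.card κ i2 = m)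
    (L : ℝ) (hL : 0 ≤ L) :
    @volume (κ → ℝ) (@MeasureTheory.MeasureSpace.pi κ i1 (fun _ => ℝ) (fun _ => Real.measureSpace))
        (@simSet κ i2 L)
      = ENNReal.ofReal (L ^ m / m.factorial) := by
  obtain rfl : i1 = i2 := Subsingleton.elim _ _
  rw [← hm]
  exact volume_simSet κ L hL

end Part2
section Part3
open MeasureTheory Pointwise

variable {n : ℕ}

/-- The orthant piece of the difference body, before sign flips. -/
def QSet (n : ℕ) (s : Finset (Fin n)) (L : ℝ) : Set (Fin n → ℝ) :=
  {x | (∀ j, 0 ≤ x j) ∧ (∑ j : {j // j ∈ s}, x j ≤ L) ∧ (∑ j : {j // ¬ j ∈ s}, x j ≤ L)}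

lemma QSet_eq (s : Finset (Fin n)) (L : ℝ) :
    QSet n s L = (MeasurableEquiv.piEquivPiSubtypeProd (fun _ : Fin n => ℝ) (· ∈ s)) ⁻¹'
      ((simSet {j // j ∈ s} L) ×ˢ (simSet {j // ¬ j ∈ s} L)) := by
  classical
  ext x
  have happ : (MeasurableEquiv.piEquivPiSubtypeProd (fun _ : Fin n => ℝ) (· ∈ s)) x
      = (fun j : {j // j ∈ s} => x j, fun j : {j // ¬ j ∈ s} => x j) := rfl
  simp only [QSet, Set.mem_preimage, happ, Set.mem_prod, simSet, Set.mem_setOf_eq]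
  constructor
  · rintro ⟨h1, h2, h3⟩
    exact ⟨⟨fun j => h1 j, h2⟩, ⟨fun j => h1 j, h3⟩⟩
  · rintro ⟨⟨h1, h2⟩, ⟨h3, h4⟩⟩
    refine ⟨fun j => ?_, h2, h4⟩
    by_cases hj : j ∈ s
    · exact h1 ⟨j, hj⟩
    · exact h3 ⟨j, hj⟩

lemma measurableSet_QSet (s : Finset (Fin n)) (L : ℝ) : MeasurableSet (QSet n s L) := by
  classical
  rw [QSet_eq]
  exact (MeasurableEquiv.piEquivPiSubtypeProd (fun _ : Fin n => ℝ) (· ∈ s)).measurable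
    ((measurableSet_simSet _ L).prod (measurableSet_simSet _ L))

lemma volume_QSet (s : Finset (Fin n)) (L : ℝ) (hL : 0 ≤ L) :
    volume (QSet n s L)
      = ENNReal.ofReal (L ^ s.card / s.card.factorial)
        * ENNReal.ofReal (L ^ (n - s.card) / (n - s.card).factorial) := by
  rw [QSet_eq]
  have mp := volume_preserving_piEquivPiSubtypeProd (fun _ : Fin n => ℝ) (· ∈ s)
  rw [mp.measure_preimage (((measurableSet_simSet _ L).prod
      (measurableSet_simSet _ L)).nullMeasurableSet)]
  rw [Measure.volume_eq_prod, Measure.prod_prod]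
  rw [volume_simSet' _ _ _ s.card ?h1 L hL, volume_simSet' _ _ _ (n - s.card) ?h2 L hL]
  case h1 => convert Fintype.card_coe s using 2
  case h2 =>
    have : Fintype.card {j // ¬ j ∈ s} = n - s.card := by
      rw [Fintype.card_subtype_compl, Fintype.card_fin, Fintype.card_coe]
    convert this using 2

/-- Coordinatewise sign flip outside `s`. -/
def flipMap (s : Finset (Fin n)) : (Fin n → ℝ) → (Fin n → ℝ) :=
  fun x j => if j ∈ s then x j else -x j

lemma measurePreserving_flipMap (s : Finset (Fin n)) :
    MeasurePreserving (flipMap s) (volume : Measure (Fin n → ℝ)) volume := by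
  classical
  have : flipMap s = fun (a : Fin n → ℝ) (j : Fin n) =>
      (fun j : Fin n => if j ∈ s then (id : ℝ → ℝ) else (Neg.neg : ℝ → ℝ)) j (a j) := by
    funext a j
    by_cases hj : j ∈ s <;> simp [flipMap, hj]
  rw [this]
  apply volume_preserving_pi
  intro j
  by_cases hj : j ∈ s <;> simp only [hj, if_pos, if_neg, if_true, if_false]
  · exact MeasurePreserving.id _
  · exact Measure.measurePreserving_neg _

def PieceSet (n : ℕ) (s : Finset (Fin n)) (L : ℝ) : Set (Fin n → ℝ) :=
  flipMap s ⁻¹' QSet n s L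

lemma volume_PieceSet (s : Finset (Fin n)) (L : ℝ) (hL : 0 ≤ L) :
    volume (PieceSet n s L)
      = ENNReal.ofReal (L ^ s.card / s.card.factorial)
        * ENNReal.ofReal (L ^ (n - s.card) / (n - s.card).factorial) := by
  rw [PieceSet, (measurePreserving_flipMap s).measure_preimage
    (measurableSet_QSet s L).nullMeasurableSet, volume_QSet s L hL]

lemma PieceSet_subset (s : Finset (Fin n)) (L : ℝ) :
    PieceSet n s L ⊆ simSet (Fin n) L - simSet (Fin n) L := by
  classical
  rintro x ⟨h1, h2, h3⟩
  set a : Fin n → ℝ := fun j => if j ∈ s then x j else 0 with ha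
  set b : Fin n → ℝ := fun j => if j ∈ s then 0 else -x j with hb
  have ha_mem : a ∈ simSet (Fin n) L := by
    constructor
    · intro j
      by_cases hj : j ∈ s
      · have := h1 j; simp only [flipMap, hj, if_pos] at this; simpa [ha, hj] using this
      · simp [ha, hj]
    · have : ∑ j, a j = ∑ j : {j // j ∈ s}, x j := by
        rw [ha]
        rw [Finset.sum_ite_mem, Finset.univ_inter]
        exact (Finset.sum_coe_sort s x).symm
      rw [this]
      have h2' : ∑ j : {j // j ∈ s}, (flipMap s x) j ≤ L := h2
      have : ∀ j : {j // j ∈ s}, (flipMap s x) j.1 = x j.1 := by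
        rintro ⟨j, hj⟩; simp [flipMap, hj]
      calc ∑ j : {j // j ∈ s}, x j.1 = ∑ j : {j // j ∈ s}, (flipMap s x) j.1 := by
            exact Finset.sum_congr rfl fun j _ => (this j).symm
        _ ≤ L := h2'
  have hb_mem : b ∈ simSet (Fin n) L := by
    constructor
    · intro j
      by_cases hj : j ∈ s
      · simp [hb, hj]
      · have := h1 j; simp only [flipMap, hj, if_neg, not_false_iff] at this
        simpa [hb, hj] using this
    · have : ∑ j, b j = ∑ j : {j // ¬ j ∈ s}, (-x j.1) := by
        rw [hb]
        rw [Finset.sum_ite]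
        simp only [Finset.sum_const_zero, zero_add]
        rw [← Finset.sum_coe_sort (Finset.univ.filter (fun j => ¬ j ∈ s)) (fun j => -x j)]
        apply Finset.sum_bij (fun (j : {x_1 // x_1 ∈ Finset.univ.filter (fun j => ¬ j ∈ s)}) _ =>
          (⟨j.1, (Finset.mem_filter.1 j.2).2⟩ : {j // ¬ j ∈ s}))
        · intros; exact Finset.mem_univ _
        · rintro ⟨j, hj⟩ - ⟨k, hk⟩ - h
          simpa using congrArg Subtype.val h
        · rintro ⟨j, hj⟩ -
          exact ⟨⟨j, by simp [hj]⟩, Finset.mem_univ _, rfl⟩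
        · intros; rfl
      rw [this]
      have h3' : ∑ j : {j // ¬ j ∈ s}, (flipMap s x) j ≤ L := h3
      have heq : ∀ j : {j // ¬ j ∈ s}, (flipMap s x) j.1 = -x j.1 := by
        rintro ⟨j, hj⟩; simp [flipMap, hj]
      calc ∑ j : {j // ¬ j ∈ s}, (-x j.1)
          = ∑ j : {j // ¬ j ∈ s}, (flipMap s x) j.1 :=
            Finset.sum_congr rfl fun j _ => (heq j).symm
        _ ≤ L := h3'
  have hx : x = a - b := by
    funext j
    by_cases hj : j ∈ s <;> simp [ha, hb, hj]
  rw [hx]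
  exact Set.sub_mem_sub ha_mem hb_mem

lemma volume_coordZero (j : Fin n) : volume {x : Fin n → ℝ | x j = 0} = 0 := by
  classical
  have : {x : Fin n → ℝ | x j = 0}
      = Set.pi Set.univ (fun i => if i = j then ({0} : Set ℝ) else Set.univ) := by
    ext x
    simp only [Set.mem_setOf_eq, Set.mem_pi, Set.mem_univ, forall_true_left]
    constructor
    · intro h i
      by_cases hi : i = j <;> simp [hi, h]
    · intro h
      have := h j
      simpa using this
  rw [this, volume_pi_pi]
  apply Finset.prod_eq_zero (Finset.mem_univ j)
  simp

lemma PieceSet_aedisjoint (L : ℝ) :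
    Pairwise (Function.onFun (AEDisjoint volume) (fun s : Finset (Fin n) => PieceSet n s L)) := by
  classical
  intro s t hst
  have : ∃ j, (j ∈ s ∧ ¬ j ∈ t) ∨ (j ∈ t ∧ ¬ j ∈ s) := by
    by_contra h
    push_neg at h
    apply hst
    ext j
    have := h j
    tauto
  obtain ⟨j, hj⟩ := this
  have hsub : PieceSet n s L ∩ PieceSet n t L ⊆ {x : Fin n → ℝ | x j = 0} := by
    rintro x ⟨⟨hx1, -, -⟩, ⟨hy1, -, -⟩⟩
    have hxs := hx1 j
    have hxt := hy1 j
    rcases hj with ⟨hjs, hjt⟩ | ⟨hjt, hjs⟩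
    · simp only [flipMap, hjs, hjt, if_pos, if_neg, not_false_iff] at hxs hxt
      simp only [Set.mem_setOf_eq]; linarith
    · simp only [flipMap, hjs, hjt, if_pos, if_neg, not_false_iff] at hxs hxt
      simp only [Set.mem_setOf_eq]; linarith
  exact measure_mono_null hsub (volume_coordZero j)

end Part3
section Part4
open Finset

lemma sum_choose_sq (n : ℕ) :
    ∑ k ∈ Finset.range (n + 1), n.choose k * n.choose k = (2 * n).choose n := by
  rw [two_mul, Nat.add_choose_eq]
  rw [Finset.Nat.sum_antidiagonal_eq_sum_range_succ (fun i j => n.choose i * n.choose j)]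
  refine Finset.sum_congr rfl fun k hk => ?_
  rw [Finset.mem_range, Nat.lt_succ_iff] at hk
  rw [Nat.choose_symm hk]

lemma sum_finset_choose_card (n : ℕ) :
    ∑ s : Finset (Fin n), n.choose s.card = (2 * n).choose n := by
  have h1 : ∑ s : Finset (Fin n), n.choose s.card
      = ∑ s ∈ (Finset.univ : Finset (Fin n)).powerset, n.choose s.card := by
    rw [Finset.powerset_univ]
  rw [h1, Finset.sum_powerset_apply_card (fun k => n.choose k)]
  simp only [Finset.card_univ, Fintype.card_fin, smul_eq_mul]
  exact sum_choose_sq n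

lemma sixteen_pow_le (n : ℕ) (hn : 1 ≤ n) :
    16 ^ n ≤ 4 * n * ((2 * n).choose n) ^ 2 := by
  induction n with
  | zero => omega
  | succ n ih =>
    rcases Nat.eq_or_lt_of_le hn with h | h
    · simp [← h]
    · have hn' : 1 ≤ n := by omega
      have ih' := ih hn'
      set c := (2 * n).choose n with hc
      set c' := (2 * (n + 1)).choose (n + 1) with hc'
      have key : (n + 1) * c' = 2 * (2 * n + 1) * c := by
        have := Nat.succ_mul_centralBinom_succ n
        simpa [Nat.centralBinom, hc, hc', Nat.mul_succ, Nat.succ_eq_add_one, mul_add] using this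
      have hmul : (n + 1) ^ 2 * (16 ^ (n + 1)) ≤ (n + 1) ^ 2 * (4 * (n + 1) * c' ^ 2) := by
        have expand : (n + 1) ^ 2 * (4 * (n + 1) * c' ^ 2) = 4 * (n + 1) * ((n + 1) * c') ^ 2 := by
          ring
        rw [expand, key]
        have lhs_le : (n + 1) ^ 2 * 16 ^ (n + 1) ≤ 16 * (n + 1) ^ 2 * (4 * n * c ^ 2) := by
          calc (n + 1) ^ 2 * 16 ^ (n + 1) = 16 * (n + 1) ^ 2 * 16 ^ n := by ring
            _ ≤ 16 * (n + 1) ^ 2 * (4 * n * c ^ 2) := by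
                exact Nat.mul_le_mul_left _ ih'
        refine lhs_le.trans ?_
        have harith : 16 * (n + 1) ^ 2 * (4 * n * c ^ 2) = (4 * n * (n+1)^2) * (16 * c ^ 2) := by
          ring
        have harith2 : 4 * (n + 1) * (2 * (2 * n + 1) * c) ^ 2
            = ((2*n+1)^2 * (n+1)) * (16 * c ^ 2) := by ring
        rw [harith, harith2]
        apply Nat.mul_le_mul_right
        nlinarith
      exact Nat.le_of_mul_le_mul_left hmul (by positivity)

end Part4
section Part5
open MeasureTheory Pointwise

lemma convex_simSet (n : ℕ) (L : ℝ) : Convex ℝ (simSet (Fin n) L) := by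
  rintro x ⟨hx1, hx2⟩ y ⟨hy1, hy2⟩ a b ha hb hab
  constructor
  · intro j
    exact add_nonneg (mul_nonneg ha (hx1 j)) (mul_nonneg hb (hy1 j))
  · have : ∑ j, (a • x + b • y) j = a * ∑ j, x j + b * ∑ j, y j := by
      simp only [Pi.add_apply, Pi.smul_apply, smul_eq_mul]
      rw [Finset.sum_add_distrib, Finset.mul_sum, Finset.mul_sum]
    rw [this]
    calc a * ∑ j, x j + b * ∑ j, y j ≤ a * L + b * L := by
          exact add_le_add (mul_le_mul_of_nonneg_left hx2 ha)
            (mul_le_mul_of_nonneg_left hy2 hb)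
      _ = L := by rw [← add_mul, hab, one_mul]

lemma volume_add_simSet (n : ℕ) (L : ℝ) (hL : 0 ≤ L) :
    volume (simSet (Fin n) L + simSet (Fin n) L)
      = ENNReal.ofReal ((2:ℝ) ^ n) * volume (simSet (Fin n) L) := by
  have h2 : simSet (Fin n) L + simSet (Fin n) L = (2:ℝ) • simSet (Fin n) L := by
    rw [show (2:ℝ) = 1 + 1 by norm_num,
      (convex_simSet n L).add_smul zero_le_one zero_le_one, one_smul]
  rw [h2, Measure.addHaar_smul]
  congr 2
  rw [abs_of_nonneg (by positivity)]
  congr 1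
  simp [Module.finrank_pi]

lemma diff_lower (n : ℕ) (L : ℝ) (hL : 0 < L) :
    ENNReal.ofReal (((2 * n).choose n : ℝ) * (L ^ n / n.factorial))
      ≤ volume (simSet (Fin n) L - simSet (Fin n) L) := by
  classical
  have hmeas : ∀ s : Finset (Fin n), MeasurableSet (PieceSet n s L) := fun s =>
    (measurePreserving_flipMap s).measurable (measurableSet_QSet s L)
  have hunion : (⋃ s : Finset (Fin n), PieceSet n s L)
      ⊆ simSet (Fin n) L - simSet (Fin n) L := by
    exact Set.iUnion_subset fun s => PieceSet_subset s L
  have hsum : volume (⋃ s : Finset (Fin n), PieceSet n s L)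
      = ∑ s : Finset (Fin n), volume (PieceSet n s L) := by
    rw [measure_iUnion₀ (PieceSet_aedisjoint L) (fun s => (hmeas s).nullMeasurableSet)]
    exact tsum_fintype _
  have hterm : ∀ s : Finset (Fin n), volume (PieceSet n s L)
      = ENNReal.ofReal ((n.choose s.card : ℝ) * (L ^ n / n.factorial)) := by
    intro s
    rw [volume_PieceSet s L hL.le, ← ENNReal.ofReal_mul (by positivity)]
    congr 1
    have hkn : s.card ≤ n := by
      simpa using Finset.card_le_univ s
    have hfact : (n.choose s.card : ℝ) * s.card.factorial * (n - s.card).factorial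
        = n.factorial := by
      exact_mod_cast Nat.choose_mul_factorial_mul_factorial hkn
    have hne1 : (s.card.factorial : ℝ) ≠ 0 := by positivity
    have hne2 : ((n - s.card).factorial : ℝ) ≠ 0 := by positivity
    have hne3 : (n.factorial : ℝ) ≠ 0 := by positivity
    rw [div_mul_div_comm, ← pow_add, Nat.add_sub_cancel' hkn]
    rw [div_eq_iff (by positivity), mul_comm ((n.choose s.card : ℝ)) _, mul_assoc]
    rw [div_mul_eq_mul_div, eq_div_iff hne3]
    linear_combination (-(L ^ n)) * hfact
  calc ENNReal.ofReal (((2 * n).choose n : ℝ) * (L ^ n / n.factorial))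
      = ∑ s : Finset (Fin n), ENNReal.ofReal ((n.choose s.card : ℝ) * (L ^ n / n.factorial)) := by
        rw [← ENNReal.ofReal_sum_of_nonneg (fun s _ => by positivity)]
        congr 1
        rw [← Finset.sum_mul]
        congr 1
        exact_mod_cast (sum_finset_choose_card n).symm
    _ = ∑ s : Finset (Fin n), volume (PieceSet n s L) := by
        exact Finset.sum_congr rfl fun s _ => (hterm s).symm
    _ = volume (⋃ s : Finset (Fin n), PieceSet n s L) := hsum.symm
    _ ≤ volume (simSet (Fin n) L - simSet (Fin n) L) := measure_mono hunion

lemma diff_finite (n : ℕ) (L : ℝ) (hL : 0 < L) :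
    volume (simSet (Fin n) L - simSet (Fin n) L) ≠ ⊤ := by
  have hsub : simSet (Fin n) L - simSet (Fin n) L
      ⊆ Set.pi Set.univ (fun _ : Fin n => Set.Icc (-L) L) := by
    rintro x ⟨a, ha, b, hb, rfl⟩
    intro j _
    have hbound : ∀ y ∈ simSet (Fin n) L, ∀ i, y i ≤ L := by
      rintro y ⟨hy1, hy2⟩ i
      calc y i ≤ ∑ k, y k := Finset.single_le_sum (fun k _ => hy1 k) (Finset.mem_univ i)
        _ ≤ L := hy2
    have h1 := hbound a ha j
    have h2 := hbound b hb j
    have h3 := ha.1 j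
    have h4 := hb.1 j
    simp only [Set.mem_Icc, Pi.sub_apply]
    constructor <;> linarith
  have hcomp : IsCompact (Set.pi Set.univ (fun _ : Fin n => Set.Icc (-L) L)) :=
    isCompact_univ_pi fun _ => isCompact_Icc
  exact ne_top_of_le_ne_top hcomp.measure_lt_top.ne (measure_mono hsub)

end Part5

open MeasureTheory Pointwise

theorem simplex_tightness :
    ∃ c : ℝ, 0 < c ∧ ∀ n : ℕ, 1 ≤ n → ∀ L : ℝ, 0 < L →
      ∀ A : Set (Fin n → ℝ),
        A = {x : Fin n → ℝ | (∀ j, 0 ≤ x j) ∧ ∑ j, x j ≤ L} →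
        c * (volume (A + A)).toReal ^ 2 / (Real.sqrt n * (volume A).toReal)
          ≤ (volume (A - A)).toReal := by
  refine ⟨1/2, by norm_num, ?_⟩
  intro n hn L hL A hA
  have hAs : A = simSet (Fin n) L := hA
  rw [hAs]
  set V : ℝ := L ^ n / n.factorial with hV
  have hVpos : 0 < V := by positivity
  have hvolA : volume (simSet (Fin n) L) = ENNReal.ofReal V := by
    rw [volume_simSet_fin, if_pos hL.le]
  have hvolA_toReal : (volume (simSet (Fin n) L)).toReal = V := by
    rw [hvolA, ENNReal.toReal_ofReal hVpos.le]
  have hvolAA : (volume (simSet (Fin n) L + simSet (Fin n) L)).toReal = 2 ^ n * V := by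
    rw [volume_add_simSet n L hL.le, hvolA, ← ENNReal.ofReal_mul (by positivity),
      ENNReal.toReal_ofReal (by positivity)]
  set cbR : ℝ := ((2 * n).choose n : ℝ) with hcbR
  have hcb_pos : 0 < cbR := by
    have h : 0 < (2 * n).choose n := Nat.choose_pos (by omega)
    rw [hcbR]
    exact_mod_cast h
  have hfin := diff_finite n L hL
  have hlow : cbR * V ≤ (volume (simSet (Fin n) L - simSet (Fin n) L)).toReal := by
    have := ENNReal.toReal_mono hfin (diff_lower n L hL)
    rwa [ENNReal.toReal_ofReal (by positivity)] at this
  rw [hvolAA, hvolA_toReal]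
  refine le_trans ?_ hlow
  have hn0 : (0:ℝ) ≤ n := by positivity
  have hnpos : (0:ℝ) < n := by exact_mod_cast hn
  have hsqrt_pos : 0 < Real.sqrt n := Real.sqrt_pos.2 hnpos
  rw [div_le_iff₀ (by positivity)]
  -- key : 4^n ≤ 2 * sqrt n * cbR
  have h16 : (16:ℝ) ^ n ≤ 4 * n * cbR ^ 2 := by
    rw [hcbR]
    exact_mod_cast sixteen_pow_le n hn
  have hsq : ((4:ℝ) ^ n) ^ 2 ≤ (2 * Real.sqrt n * cbR) ^ 2 := by
    have h1 : ((4:ℝ) ^ n) ^ 2 = 16 ^ n := by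
      rw [← pow_mul, mul_comm, pow_mul]; norm_num
    have h2 : (2 * Real.sqrt n * cbR) ^ 2 = 4 * n * cbR ^ 2 := by
      have hs : Real.sqrt n ^ 2 = n := Real.sq_sqrt hn0
      calc (2 * Real.sqrt n * cbR) ^ 2 = 4 * Real.sqrt n ^ 2 * cbR ^ 2 := by ring
        _ = 4 * n * cbR ^ 2 := by rw [hs]
    rw [h1, h2]; exact h16
  have key : (4:ℝ) ^ n ≤ 2 * Real.sqrt n * cbR := by
    have := Real.sqrt_le_sqrt hsq
    rwa [Real.sqrt_sq (by positivity), Real.sqrt_sq (by positivity)] at this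
  have h4n : ((2:ℝ) ^ n * V) ^ 2 = 4 ^ n * V ^ 2 := by
    rw [mul_pow, ← pow_mul, mul_comm n 2, pow_mul]; norm_num
  rw [h4n]
  calc 1 / 2 * (4 ^ n * V ^ 2) ≤ 1 / 2 * ((2 * Real.sqrt n * cbR) * V ^ 2) := by
        apply mul_le_mul_of_nonneg_left _ (by norm_num)
        exact mul_le_mul_of_nonneg_right key (by positivity)
    _ = cbR * V * (Real.sqrt n * V) := by ring
end
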